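/- Consider the augmented-Lagrangian iteration errors: in Hilbert spaces X, M, let u_{m+1} ∈ X, q_m ∈ M satisfy energy relations yielding ‖q_{m+1}‖² - ‖q_m‖² + ‖q_{m+1}-q_m‖² + 2ρ_m·D_{m+1} + 2ρ_m r‖Bu_{m+1}‖² = -2ρ_m(Bu_{m+1}, q_{m+1}-q_m), where D_{m+1} ≥ 0, B ∈ L(X,M), r > 0, and 0 < ρ ≤ ρ_m ≤ ρ̄ < 2r. Then ‖q_{m+1}‖² - ‖q_m‖² + 2ρ_m D_{m+1} + ρ_m(2r - ρ_m)‖Bu_{m+1}‖² ≤ 0; consequently {‖q_m‖} is nonincreasing and convergent, Σ D_m < ∞ so D_m → 0, and Bu_m → 0 in M. -/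

import Mathlib

open Filter

/-- convergence bookkeeping of the augmented-Lagrangian algorithm
(Theorem 9.4, eqs. (9.30)–(9.35)). -/
theorem augmented_lagrangian_convergence
    {X M : Type*} [NormedAddCommGroup X] [InnerProductSpace ℝ X] [CompleteSpace X]
    [NormedAddCommGroup M] [InnerProductSpace ℝ M] [CompleteSpace M]
    (B : X →L[ℝ] M) (u : ℕ → X) (q : ℕ → M) (D : ℕ → ℝ) (ρ : ℕ → ℝ)
    (r ρlo ρhi : ℝ) (hr : 0 < r)
    (hD : ∀ m, 0 ≤ D m)
    (hρlo : 0 < ρlo) (hρhi : ρhi < 2 * r)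
    (hρ : ∀ m, ρlo ≤ ρ m ∧ ρ m ≤ ρhi)
    (henergy : ∀ m, ‖q (m + 1)‖ ^ 2 - ‖q m‖ ^ 2 + ‖q (m + 1) - q m‖ ^ 2
      + 2 * ρ m * D (m + 1) + 2 * ρ m * r * ‖B (u (m + 1))‖ ^ 2
      = -2 * ρ m * (inner ℝ (B (u (m + 1))) (q (m + 1) - q m) : ℝ)) :
    (∀ m, ‖q (m + 1)‖ ^ 2 - ‖q m‖ ^ 2 + 2 * ρ m * D (m + 1)
      + ρ m * (2 * r - ρ m) * ‖B (u (m + 1))‖ ^ 2 ≤ 0) ∧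
    Antitone (fun m => ‖q m‖) ∧
    (∃ α : ℝ, Tendsto (fun m => ‖q m‖) atTop (nhds α)) ∧
    Summable D ∧
    Tendsto D atTop (nhds 0) ∧
    Tendsto (fun m => B (u m)) atTop (nhds 0) := by
  have hρpos : ∀ m, 0 < ρ m := fun m => lt_of_lt_of_le hρlo (hρ m).1
  have hρub : ∀ m, 0 < 2 * r - ρ m := fun m => by have := (hρ m).2; linarith
  -- key inequality
  have key : ∀ m, ‖q (m + 1)‖ ^ 2 - ‖q m‖ ^ 2 + 2 * ρ m * D (m + 1)
      + ρ m * (2 * r - ρ m) * ‖B (u (m + 1))‖ ^ 2 ≤ 0 := by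
    intro m
    have hE := henergy m
    have hcs : |(inner ℝ (B (u (m + 1))) (q (m + 1) - q m) : ℝ)|
        ≤ ‖B (u (m + 1))‖ * ‖q (m + 1) - q m‖ := abs_real_inner_le_norm _ _
    have h1 := abs_le.mp hcs
    nlinarith [sq_nonneg (‖q (m + 1) - q m‖ - ρ m * ‖B (u (m + 1))‖),
      (hρpos m).le,
      mul_nonneg (hρpos m).le
        (by linarith [h1.1] :
          (0:ℝ) ≤ ‖B (u (m + 1))‖ * ‖q (m + 1) - q m‖
            + (inner ℝ (B (u (m + 1))) (q (m + 1) - q m) : ℝ))]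
  -- squared norms nonincreasing with quantitative gaps
  have hgapD : ∀ m, 2 * ρlo * D (m + 1) ≤ ‖q m‖ ^ 2 - ‖q (m + 1)‖ ^ 2 := by
    intro m
    have hk := key m
    have h1 : 2 * ρlo * D (m + 1) ≤ 2 * ρ m * D (m + 1) := by
      have := (hρ m).1
      nlinarith [hD (m + 1)]
    nlinarith [mul_nonneg (mul_pos (hρpos m) (hρub m)).le (sq_nonneg ‖B (u (m + 1))‖)]
  have hδ : 0 < ρlo * (2 * r - ρhi) := mul_pos hρlo (by linarith)
  have hgapB : ∀ m, ρlo * (2 * r - ρhi) * ‖B (u (m + 1))‖ ^ 2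
      ≤ ‖q m‖ ^ 2 - ‖q (m + 1)‖ ^ 2 := by
    intro m
    have hk := key m
    have h1 : ρlo * (2 * r - ρhi) * ‖B (u (m + 1))‖ ^ 2
        ≤ ρ m * (2 * r - ρ m) * ‖B (u (m + 1))‖ ^ 2 := by
      have h2 := (hρ m).1
      have h3 := (hρ m).2
      have : ρlo * (2 * r - ρhi) ≤ ρ m * (2 * r - ρ m) := by nlinarith
      exact mul_le_mul_of_nonneg_right this (sq_nonneg _)
    nlinarith [mul_nonneg (mul_pos (by norm_num : (0:ℝ) < 2) (hρpos m)).le (hD (m + 1))]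
  have hsq : ∀ m, ‖q (m + 1)‖ ^ 2 ≤ ‖q m‖ ^ 2 := by
    intro m
    have := hgapD m
    nlinarith [mul_nonneg (by linarith : (0:ℝ) ≤ 2 * ρlo) (hD (m + 1))]
  have hant : Antitone (fun m => ‖q m‖) := by
    apply antitone_nat_of_succ_le
    intro m
    have := hsq m
    nlinarith [norm_nonneg (q m), norm_nonneg (q (m + 1))]
  refine ⟨key, hant, ?_, ?_, ?_, ?_⟩
  · exact ⟨_, tendsto_atTop_ciInf hant ⟨0, fun x ⟨m, hm⟩ => hm ▸ norm_nonneg _⟩⟩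
  · -- Summability of D
    have htel : Summable (fun m => ‖q m‖ ^ 2 - ‖q (m + 1)‖ ^ 2) := by
      apply summable_of_sum_range_le (c := ‖q 0‖ ^ 2)
      · intro m; linarith [hgapD m, mul_nonneg (by linarith : (0:ℝ) ≤ 2 * ρlo) (hD (m + 1))]
      · intro n
        rw [Finset.sum_range_sub' (fun m => ‖q m‖ ^ 2)]
        nlinarith [sq_nonneg ‖q n‖]
    have hsum1 : Summable (fun m => D (m + 1)) := by
      apply Summable.of_nonneg_of_le (fun m => hD (m + 1))
        (fun m => ?_) (htel.mul_left (1 / (2 * ρlo)))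
      have := hgapD m
      rw [div_mul_eq_mul_div, le_div_iff₀ (by linarith : (0:ℝ) < 2 * ρlo)]
      linarith
    exact (summable_nat_add_iff 1).mp hsum1
  · -- D → 0
    have htel : Summable (fun m => ‖q m‖ ^ 2 - ‖q (m + 1)‖ ^ 2) := by
      apply summable_of_sum_range_le (c := ‖q 0‖ ^ 2)
      · intro m; linarith [hgapD m, mul_nonneg (by linarith : (0:ℝ) ≤ 2 * ρlo) (hD (m + 1))]
      · intro n
        rw [Finset.sum_range_sub' (fun m => ‖q m‖ ^ 2)]
        nlinarith [sq_nonneg ‖q n‖]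
    have hsum1 : Summable (fun m => D (m + 1)) := by
      apply Summable.of_nonneg_of_le (fun m => hD (m + 1))
        (fun m => ?_) (htel.mul_left (1 / (2 * ρlo)))
      have := hgapD m
      rw [div_mul_eq_mul_div, le_div_iff₀ (by linarith : (0:ℝ) < 2 * ρlo)]
      linarith
    have := ((summable_nat_add_iff 1).mp hsum1).tendsto_atTop_zero
    exact this
  · -- Bu → 0
    have htel : Summable (fun m => ‖q m‖ ^ 2 - ‖q (m + 1)‖ ^ 2) := by
      apply summable_of_sum_range_le (c := ‖q 0‖ ^ 2)
      · intro m; linarith [hgapD m, mul_nonneg (by linarith : (0:ℝ) ≤ 2 * ρlo) (hD (m + 1))]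
      · intro n
        rw [Finset.sum_range_sub' (fun m => ‖q m‖ ^ 2)]
        nlinarith [sq_nonneg ‖q n‖]
    have hsumB : Summable (fun m => ‖B (u (m + 1))‖ ^ 2) := by
      apply Summable.of_nonneg_of_le (fun m => sq_nonneg _)
        (fun m => ?_) (htel.mul_left (1 / (ρlo * (2 * r - ρhi))))
      have := hgapB m
      rw [div_mul_eq_mul_div, le_div_iff₀ hδ]
      linarith
    have hsq0 : Tendsto (fun m => ‖B (u (m + 1))‖ ^ 2) atTop (nhds 0) :=
      hsumB.tendsto_atTop_zero
    have hn0 : Tendsto (fun m => ‖B (u (m + 1))‖) atTop (nhds 0) := by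
      have := (Real.continuous_sqrt.tendsto 0).comp hsq0
      simp only [Real.sqrt_zero] at this
      convert this using 2 with m
      simp [Function.comp, Real.sqrt_sq (norm_nonneg _)]
    have h1 : Tendsto (fun m => B (u (m + 1))) atTop (nhds 0) :=
      tendsto_zero_iff_norm_tendsto_zero.mpr hn0
    exact (tendsto_add_atTop_iff_nat 1).mp h1
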